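/- Let τ be a row-standard tableau (a filling of a Young diagram with 1,…,n such that entries increase left to right along rows). If one rearranges the entries in each column of τ into increasing order from top to bottom, the resulting tableau st(τ) is a standard tableau: its rows still increase to the right and its columns increase to the bottom. -/

import Mathlib

private lemma down_mem {S : Finset ℕ} {i : ℕ}
    (hdc : ∀ a ∈ S, ∀ b, b ≤ a → b ∈ S) (hcard : i + 1 ≤ S.card) : i ∈ S := by
  by_contra h
  have hsub : S ⊆ Finset.range i := by
    intro a ha
    simp only [Finset.mem_range]
    by_contra hlt
    exact h (hdc a ha i (le_of_not_gt hlt))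
  have := Finset.card_le_card hsub
  simp only [Finset.card_range] at this
  omega

private lemma count_eq (Y : YoungDiagram) (τ σ : ℕ × ℕ → ℕ)
    (hcolperm : ∀ j : ℕ,
      Multiset.map σ (Y.cells.filter (fun c => c.2 = j)).val =
        Multiset.map τ (Y.cells.filter (fun c => c.2 = j)).val)
    (j : ℕ) (p : ℕ → Prop) [DecidablePred p] :
    ((Y.cells.filter (fun c => c.2 = j)).filter (fun c => p (σ c))).card
      = ((Y.cells.filter (fun c => c.2 = j)).filter (fun c => p (τ c))).card := by
  have h1 : ∀ f : ℕ × ℕ → ℕ,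
      ((Y.cells.filter (fun c => c.2 = j)).filter (fun c => p (f c))).card
        = Multiset.countP p (Multiset.map f (Y.cells.filter (fun c => c.2 = j)).val) := by
    intro f
    rw [Multiset.countP_map]
    rfl
  rw [h1, h1, hcolperm j]

private lemma step_lemma (Y : YoungDiagram) (τ σ : ℕ × ℕ → ℕ)
    (hrow : ∀ i j₁ j₂ : ℕ, (i, j₁) ∈ Y → (i, j₂) ∈ Y → j₁ < j₂ → τ (i, j₁) < τ (i, j₂))
    (hcolperm : ∀ j : ℕ,
      Multiset.map σ (Y.cells.filter (fun c => c.2 = j)).val =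
        Multiset.map τ (Y.cells.filter (fun c => c.2 = j)).val)
    (hσcol : ∀ i₁ i₂ j : ℕ, (i₁, j) ∈ Y → (i₂, j) ∈ Y → i₁ < i₂ → σ (i₁, j) < σ (i₂, j))
    (i j : ℕ) (hmem : (i, j + 1) ∈ Y) : σ (i, j) < σ (i, j + 1) := by
  set v := σ (i, j + 1) with hv
  -- σ-monotone: for r ≤ i, σ (r, j+1) ≤ v
  -- Claim 1: at least i+1 cells of column j+1 have σ ≤ v
  have hmem' : ∀ r ≤ i, (r, j + 1) ∈ Y := fun r hr => Y.up_left_mem hr le_rfl hmem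
  have claim1 : i + 1 ≤ ((Y.cells.filter (fun c => c.2 = j + 1)).filter
      (fun c => σ c ≤ v)).card := by
    have : Finset.image (fun r => (r, j + 1)) (Finset.range (i + 1)) ⊆
        (Y.cells.filter (fun c => c.2 = j + 1)).filter (fun c => σ c ≤ v) := by
      intro c hc
      simp only [Finset.mem_image, Finset.mem_range] at hc
      obtain ⟨r, hr, rfl⟩ := hc
      have hrm := hmem' r (Nat.lt_succ_iff.mp hr)
      simp only [Finset.mem_filter, YoungDiagram.mem_cells]
      refine ⟨⟨hrm, trivial⟩, ?_⟩
      rcases Nat.lt_or_ge r i with h | h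
      · exact le_of_lt (hσcol r i (j + 1) hrm hmem h)
      · have : r = i := le_antisymm (Nat.lt_succ_iff.mp hr) h
        subst this; exact le_rfl
    calc i + 1 = (Finset.image (fun r => (r, j + 1)) (Finset.range (i + 1))).card := by
          rw [Finset.card_image_of_injective _ (fun a b h => by simpa using h),
            Finset.card_range]
      _ ≤ _ := Finset.card_le_card this
  -- transfer to τ counts on column j+1
  rw [count_eq Y τ σ hcolperm (j + 1) (fun x => x ≤ v)] at claim1
  -- Claim 3: injection into column j with τ < v
  have claim3 : ((Y.cells.filter (fun c => c.2 = j + 1)).filter (fun c => τ c ≤ v)).card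
      ≤ ((Y.cells.filter (fun c => c.2 = j)).filter (fun c => τ c < v)).card := by
    apply Finset.card_le_card_of_injOn (fun c => (c.1, j))
    · intro c hc
      simp only [Finset.mem_coe, Finset.mem_filter, YoungDiagram.mem_cells] at hc ⊢
      obtain ⟨⟨hcY, hc2⟩, hle⟩ := hc
      have hcY' : (c.1, j + 1) ∈ Y := by rwa [← hc2, Prod.mk.eta]
      have hjY : (c.1, j) ∈ Y := Y.up_left_mem le_rfl (Nat.le_succ j) hcY'
      refine ⟨⟨hjY, trivial⟩, ?_⟩
      have := hrow c.1 j (j + 1) hjY hcY' (Nat.lt_succ_self j)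
      calc τ (c.1, j) < τ (c.1, j + 1) := this
        _ = τ c := by rw [← hc2, Prod.mk.eta]
        _ ≤ v := hle
    · intro a ha b hb hab
      simp only [Finset.mem_coe, Finset.mem_filter] at ha hb
      have : a.1 = b.1 := by simpa using congrArg Prod.fst hab
      exact Prod.ext this (ha.1.2.trans hb.1.2.symm)
  -- back to σ
  rw [← count_eq Y τ σ hcolperm j (fun x => x < v)] at claim3
  have claim4 : i + 1 ≤ ((Y.cells.filter (fun c => c.2 = j)).filter
      (fun c => σ c < v)).card := le_trans claim1 claim3
  -- image of rows
  set S := ((Y.cells.filter (fun c => c.2 = j)).filter (fun c => σ c < v)).image Prod.fst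
    with hS
  have hcardS : ((Y.cells.filter (fun c => c.2 = j)).filter (fun c => σ c < v)).card
      = S.card := by
    rw [hS, Finset.card_image_of_injOn]
    intro a ha b hb hab
    simp only [Finset.mem_coe, Finset.mem_filter, YoungDiagram.mem_cells] at ha hb
    exact Prod.ext hab (ha.1.2.trans hb.1.2.symm)
  have hmemS : ∀ r ∈ S, (r, j) ∈ Y ∧ σ (r, j) < v := by
    intro r hr
    simp only [hS, Finset.mem_image, Finset.mem_filter, YoungDiagram.mem_cells] at hr
    obtain ⟨c, ⟨⟨hcY, hc2⟩, hlt⟩, rfl⟩ := hr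
    have : c = (c.1, j) := by rw [← hc2, Prod.mk.eta]
    rw [this] at hcY hlt
    exact ⟨hcY, hlt⟩
  have hdc : ∀ a ∈ S, ∀ b, b ≤ a → b ∈ S := by
    intro a ha b hb
    obtain ⟨haY, halt⟩ := hmemS a ha
    have hbY : (b, j) ∈ Y := Y.up_left_mem hb le_rfl haY
    have hblt : σ (b, j) < v := by
      rcases Nat.lt_or_ge b a with h | h
      · exact lt_trans (hσcol b a j hbY haY h) halt
      · have : b = a := le_antisymm hb h
        subst this; exact halt
    simp only [hS, Finset.mem_image]
    exact ⟨(b, j), by simp [Finset.mem_filter, hbY, hblt], rfl⟩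
  have : i ∈ S := down_mem hdc (by omega)
  exact (hmemS i this).2

theorem stmt_0 (Y : YoungDiagram) (τ σ : ℕ × ℕ → ℕ)
    (hbij : Set.BijOn τ ↑Y.cells (Set.Icc 1 Y.card))
    (hrow : ∀ i j₁ j₂ : ℕ, (i, j₁) ∈ Y → (i, j₂) ∈ Y → j₁ < j₂ → τ (i, j₁) < τ (i, j₂))
    (hcolperm : ∀ j : ℕ,
      Multiset.map σ (Y.cells.filter (fun c => c.2 = j)).val =
        Multiset.map τ (Y.cells.filter (fun c => c.2 = j)).val)
    (hσcol : ∀ i₁ i₂ j : ℕ, (i₁, j) ∈ Y → (i₂, j) ∈ Y → i₁ < i₂ → σ (i₁, j) < σ (i₂, j)) :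
    (∀ i j₁ j₂ : ℕ, (i, j₁) ∈ Y → (i, j₂) ∈ Y → j₁ < j₂ → σ (i, j₁) < σ (i, j₂)) ∧
      (∀ i₁ i₂ j : ℕ, (i₁, j) ∈ Y → (i₂, j) ∈ Y → i₁ < i₂ → σ (i₁, j) < σ (i₂, j)) := by
  refine ⟨?_, hσcol⟩
  intro i j₁ j₂ hm1 hm2 hlt
  induction j₂ with
  | zero => omega
  | succ j ih =>
    have hstep := step_lemma Y τ σ hrow hcolperm hσcol i j hm2
    rcases Nat.lt_or_ge j₁ j with h | h
    · have hmj : (i, j) ∈ Y := Y.up_left_mem le_rfl (Nat.le_succ j) hm2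
      exact lt_trans (ih hmj h) hstep
    · have : j₁ = j := by omega
      subst this; exact hstep
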